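/- Let T_n be a strongly connected tournament of order n and irregularity i(T_n), and let v be any vertex of T_n. If i(T_n) = 1, then the number of directed triangles containing v is at least n·(n−2)/8; if i(T_n) ≠ 1, then the number of directed triangles containing v is at least (n−1)·(n+1−2·i(T_n))/8. -/

import Mathlib

open Finset

/-- A tournament on vertex type `V`: between every two distinct vertices there is
exactly one arc, and there are no loops. -/
structure Tournament (V : Type) where
  arc : V → V → Bool
  irrefl : ∀ v, arc v v = false
  oneArc : ∀ u v : V, u ≠ v → arc u v = !arc v u

namespace Tournament

variable {V : Type} [Fintype V]

/-- Outdegree `d⁺(v)`. -/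
def outDeg (T : Tournament V) (v : V) : ℕ :=
  (univ.filter fun w => T.arc v w).card

/-- Indegree `d⁻(v)`. -/
def inDeg (T : Tournament V) (v : V) : ℕ :=
  (univ.filter fun u => T.arc u v).card

/-- `δ(v) = min{d⁺(v), d⁻(v)}`. -/
def minDeg (T : Tournament V) (v : V) : ℕ :=
  min (T.outDeg v) (T.inDeg v)

/-- The irregularity `i(T)`: the maximum of `|d⁺(v) − d⁻(v)|` over all vertices. -/
def irreg (T : Tournament V) : ℕ :=
  univ.sup fun v => ((T.outDeg v : ℤ) - (T.inDeg v : ℤ)).natAbs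

/-- Strong connectivity: every vertex can reach every other vertex by a directed path. -/
def StronglyConnected (T : Tournament V) : Prop :=
  ∀ u v : V, Relation.ReflTransGen (fun a b => T.arc a b) u v

/-- The number of in-arcs of `v` with color `c`. -/
def monoInDeg (T : Tournament V) (C : V → V → ℕ) (v : V) (c : ℕ) : ℕ :=
  (univ.filter fun u => T.arc u v ∧ C u v = c).card

/-- The number of out-arcs of `v` with color `c`. -/
def monoOutDeg (T : Tournament V) (C : V → V → ℕ) (v : V) (c : ℕ) : ℕ :=
  (univ.filter fun w => T.arc v w ∧ C v w = c).card

/-- The maximum monochromatic indegree `Δ^{-mon}(T)`. -/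
def maxMonoIn (T : Tournament V) (C : V → V → ℕ) : ℕ :=
  univ.sup fun v => (univ.image fun u => C u v).sup (T.monoInDeg C v)

/-- The maximum monochromatic outdegree `Δ^{+mon}(T)`. -/
def maxMonoOut (T : Tournament V) (C : V → V → ℕ) : ℕ :=
  univ.sup fun v => (univ.image fun w => C v w).sup (T.monoOutDeg C v)

/-- The directed triangles through `v`, encoded as ordered pairs `(w, u)` with
arcs `v → w → u → v`.  This gives each triangle through `v` exactly once. -/
def trianglesThrough (T : Tournament V) (v : V) : Finset (V × V) :=
  univ.filter fun p => T.arc v p.1 ∧ T.arc p.1 p.2 ∧ T.arc p.2 v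

/-- The rainbow triangles through `v`: all three arcs have pairwise distinct colors. -/
def rainbowTrianglesThrough (T : Tournament V) (C : V → V → ℕ) (v : V) : Finset (V × V) :=
  (T.trianglesThrough v).filter fun p =>
    C v p.1 ≠ C p.1 p.2 ∧ C p.1 p.2 ≠ C p.2 v ∧ C p.2 v ≠ C v p.1

/-- The non-rainbow triangles through `v`: some two arcs share a color. -/
def nonRainbowTrianglesThrough (T : Tournament V) (C : V → V → ℕ) (v : V) : Finset (V × V) :=
  (T.trianglesThrough v).filter fun p =>
    ¬(C v p.1 ≠ C p.1 p.2 ∧ C p.1 p.2 ≠ C p.2 v ∧ C p.2 v ≠ C v p.1)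

/-- Ordered triples `(x, y, z)` with arcs `x → y → z → x`.  Each directed triangle
is counted exactly three times (once per cyclic rotation). -/
def triangleTriples (T : Tournament V) : Finset (V × V × V) :=
  univ.filter fun p => T.arc p.1 p.2.1 ∧ T.arc p.2.1 p.2.2 ∧ T.arc p.2.2 p.1

/-- Ordered triples representing rainbow triangles (each rainbow triangle thrice). -/
def rainbowTriples (T : Tournament V) (C : V → V → ℕ) : Finset (V × V × V) :=
  T.triangleTriples.filter fun p =>
    C p.1 p.2.1 ≠ C p.2.1 p.2.2 ∧ C p.2.1 p.2.2 ≠ C p.2.2 p.1 ∧ C p.2.2 p.1 ≠ C p.1 p.2.1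

/-- Ordered triples representing non-rainbow triangles (each such triangle thrice). -/
def nonRainbowTriples (T : Tournament V) (C : V → V → ℕ) : Finset (V × V × V) :=
  T.triangleTriples.filter fun p =>
    ¬(C p.1 p.2.1 ≠ C p.2.1 p.2.2 ∧ C p.2.1 p.2.2 ≠ C p.2.2 p.1 ∧ C p.2.2 p.1 ≠ C p.1 p.2.1)

end Tournament

namespace Tournament

variable {V : Type} [Fintype V]

lemma arc_trichotomy' (T : Tournament V) [DecidableEq V] (w u : V) :
    (if T.arc w u then 1 else 0) + (if T.arc u w then 1 else 0)
      + (if u = w then 1 else 0) = 1 := by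
  by_cases hu : u = w
  · subst hu; simp [T.irrefl]
  · have h := T.oneArc w u (Ne.symm hu)
    cases h2 : T.arc u w <;> rw [h2] at h <;> simp [h, h2, hu]

lemma deg_add' (T : Tournament V) (w : V) :
    T.outDeg w + T.inDeg w + 1 = Fintype.card V := by
  classical
  have h1 : T.outDeg w = ∑ u : V, (if T.arc w u then 1 else 0) :=
    Finset.card_filter _ _
  have h2 : T.inDeg w = ∑ u : V, (if T.arc u w then 1 else 0) :=
    Finset.card_filter _ _
  have h3 : (1 : ℕ) = ∑ u : V, (if u = w then 1 else 0) := by simp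
  have key : ∑ u : V, ((if T.arc w u then 1 else 0) + (if T.arc u w then 1 else 0)
      + (if u = w then 1 else 0)) = Fintype.card V := by
    rw [Finset.sum_congr rfl fun u _ => T.arc_trichotomy' w u]
    simp [Finset.card_univ]
  rw [Finset.sum_add_distrib, Finset.sum_add_distrib] at key
  omega

lemma key_bound' (T : Tournament V) (v : V) :
    (T.outDeg v : ℤ) * ((Fintype.card V : ℤ) - T.outDeg v - T.irreg) ≤
      2 * ((T.trianglesThrough v).card : ℤ) := by
  classical
  set n := Fintype.card V with hn
  set i := T.irreg with hi
  set A : Finset V := univ.filter fun w => T.arc v w with hA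
  have hAcard : A.card = T.outDeg v := rfl
  set S : ℕ := ∑ w ∈ A, T.outDeg w with hS
  set E : ℕ := ∑ w ∈ A, ∑ u ∈ A, (if T.arc w u then 1 else 0) with hE
  -- triangles count as a double sum
  have ht : (T.trianglesThrough v).card
      = ∑ w ∈ A, ∑ u : V, (if T.arc w u ∧ T.arc u v then 1 else 0) := by
    rw [trianglesThrough, Finset.card_filter, Fintype.sum_prod_type, hA,
      Finset.sum_filter]
    apply Finset.sum_congr rfl
    intro w _
    by_cases hw : T.arc v w <;> simp [hw]
  -- split of S
  have h1 : S = (T.trianglesThrough v).card + E := by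
    rw [ht, hE, ← Finset.sum_add_distrib, hS]
    apply Finset.sum_congr rfl
    intro w hw
    rw [hA, Finset.mem_filter] at hw
    have hw' : T.arc v w := hw.2
    have hwv : T.arc w v = false := by
      have hne : w ≠ v := by
        rintro rfl; rw [T.irrefl] at hw'; exact absurd hw' (by simp)
      rw [T.oneArc w v hne, hw']; rfl
    rw [outDeg, Finset.card_filter, hA, Finset.sum_filter,
      ← Finset.sum_add_distrib]
    apply Finset.sum_congr rfl
    intro u _
    cases hwu : T.arc w u
    · simp [hwu]
    · have huv : u ≠ v := by
        rintro rfl; rw [hwu] at hwv; exact absurd hwv (by simp)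
      have h := T.oneArc u v huv
      cases hvu : T.arc v u <;> rw [hvu] at h <;> simp at h <;>
        simp [hwu, h, hvu]
  -- double counting within A
  have h2 : 2 * E + A.card = A.card * A.card := by
    have hswap : E = ∑ w ∈ A, ∑ u ∈ A, (if T.arc u w then 1 else 0) := by
      rw [hE]; exact Finset.sum_comm
    have hone : A.card = ∑ w ∈ A, ∑ u ∈ A, (if u = w then 1 else 0) := by
      rw [Finset.sum_congr rfl fun w hw => ?_, Finset.sum_const, smul_eq_mul, mul_one]
      rw [Finset.sum_ite_eq' A w (fun _ => 1), if_pos hw]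
    have : 2 * E + A.card
        = ∑ w ∈ A, ∑ u ∈ A,
            ((if T.arc w u then 1 else 0) + (if T.arc u w then 1 else 0)
              + (if u = w then 1 else 0)) := by
      rw [two_mul]
      nth_rewrite 2 [hswap]
      rw [hone, hE, ← Finset.sum_add_distrib, ← Finset.sum_add_distrib]
      apply Finset.sum_congr rfl
      intro w _
      rw [← Finset.sum_add_distrib, ← Finset.sum_add_distrib]
    rw [this, Finset.sum_congr rfl fun w _ =>
      Finset.sum_congr rfl fun u _ => T.arc_trichotomy' w u]
    simp [mul_comm]
  -- degree lower bound
  have hdeg : ∀ w : V, (n : ℤ) - 1 - i ≤ 2 * T.outDeg w := by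
    intro w
    have hd := T.deg_add' w
    have habs : ((T.outDeg w : ℤ) - T.inDeg w).natAbs ≤ i := by
      rw [hi]
      exact Finset.le_sup (f := fun u => ((T.outDeg u : ℤ) - T.inDeg u).natAbs)
        (Finset.mem_univ w)
    rw [← hn] at hd
    omega
  have h3 : (A.card : ℤ) * ((n : ℤ) - 1 - i) ≤ 2 * (S : ℤ) := by
    calc (A.card : ℤ) * ((n : ℤ) - 1 - i)
        = ∑ _w ∈ A, ((n : ℤ) - 1 - i) := by
          rw [Finset.sum_const, nsmul_eq_mul]
      _ ≤ ∑ w ∈ A, 2 * (T.outDeg w : ℤ) :=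
          Finset.sum_le_sum fun w _ => hdeg w
      _ = 2 * (S : ℤ) := by rw [← Finset.mul_sum, hS]; push_cast; ring
  have h1' : (S : ℤ) = ((T.trianglesThrough v).card : ℤ) + E := by
    exact_mod_cast h1
  have h2' : 2 * (E : ℤ) + (A.card : ℤ) = (A.card : ℤ) * A.card := by
    exact_mod_cast h2
  rw [← hAcard]
  have hr : (A.card : ℤ) * ((n : ℤ) - A.card - i)
      + ((A.card : ℤ) * A.card - A.card) = (A.card : ℤ) * ((n : ℤ) - 1 - i) := by
    ring
  linarith

/-- The reversed tournament. -/
def rev (T : Tournament V) : Tournament V where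
  arc u v := T.arc v u
  irrefl v := T.irrefl v
  oneArc u v h := T.oneArc v u (Ne.symm h)

lemma rev_outDeg (T : Tournament V) (w : V) : (T.rev).outDeg w = T.inDeg w := rfl

lemma rev_inDeg (T : Tournament V) (w : V) : (T.rev).inDeg w = T.outDeg w := rfl

lemma rev_irreg (T : Tournament V) : (T.rev).irreg = T.irreg := by
  unfold irreg
  apply Finset.sup_congr rfl
  intro w _
  rw [T.rev_outDeg w, T.rev_inDeg w]
  omega

lemma rev_triangles (T : Tournament V) (v : V) :
    ((T.rev).trianglesThrough v).card = (T.trianglesThrough v).card := by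
  refine Finset.card_bij' (fun p _ => p.swap) (fun p _ => p.swap) ?_ ?_
    (fun p _ => Prod.swap_swap p) (fun p _ => Prod.swap_swap p)
  · intro p hp
    simp only [trianglesThrough, Finset.mem_filter, Finset.mem_univ,
      true_and, Prod.fst_swap, Prod.snd_swap] at hp ⊢
    simp only [rev] at hp ⊢
    tauto
  · intro p hp
    simp only [trianglesThrough, Finset.mem_filter, Finset.mem_univ,
      true_and, Prod.fst_swap, Prod.snd_swap] at hp ⊢
    simp only [rev] at hp ⊢
    tauto

lemma qalgebra (t a b n i : ℚ) (hab : a + b + 1 = n)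
    (h1 : a * (n - a - i) ≤ 2 * t) (h2 : b * (n - b - i) ≤ 2 * t)
    (h3 : a - b ≤ i) (h4 : b - a ≤ i) :
    (i = 1 → n * (n - 2) ≤ t * 8) ∧
    ((i = 0 ∨ 2 ≤ i) → (n - 1) * (n + 1 - 2 * i) ≤ t * 8) := by
  constructor
  · rintro rfl
    rcases le_total a b with hle | hle
    · nlinarith [h1, mul_nonneg (show (0:ℚ) ≤ 2*a-(n-2) by linarith)
        (show (0:ℚ) ≤ n-2*a by linarith)]
    · nlinarith [h2, mul_nonneg (show (0:ℚ) ≤ 2*b-(n-2) by linarith)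
        (show (0:ℚ) ≤ n-2*b by linarith)]
  · intro hi
    rcases le_total a b with hle | hle
    · have hP : (0:ℚ) ≤ (n-1-2*a)*(2*a-(n+1-2*i)) := by
        rcases hi with h0 | h2i
        · subst h0
          have hz : n - 1 - 2*a = 0 := by linarith
          rw [hz, zero_mul]
        · exact mul_nonneg (by linarith) (by linarith)
      nlinarith [h1, hP]
    · have hP : (0:ℚ) ≤ (n-1-2*b)*(2*b-(n+1-2*i)) := by
        rcases hi with h0 | h2i
        · subst h0
          have hz : n - 1 - 2*b = 0 := by linarith
          rw [hz, zero_mul]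
        · exact mul_nonneg (by linarith) (by linarith)
      nlinarith [h2, hP]

end Tournament

/-- Claim 1: In a strongly connected tournament of order `n`, for any
vertex `v`: if `i(T) = 1` then `v` lies on at least `n(n−2)/8` directed triangles,
and if `i(T) ≠ 1` then `v` lies on at least `(n−1)(n+1−2 i(T))/8` directed triangles. -/
theorem triangles_through_vertex_lower_bound_uniform
    {V : Type} [Fintype V] (n : ℕ) (hn : Fintype.card V = n)
    (T : Tournament V)
    (hsc : T.StronglyConnected)
    (v : V) :
    (T.irreg = 1 →
      ((T.trianglesThrough v).card : ℚ) ≥ (n : ℚ) * ((n : ℚ) - 2) / 8) ∧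
    (T.irreg ≠ 1 →
      ((T.trianglesThrough v).card : ℚ) ≥
        ((n : ℚ) - 1) * ((n : ℚ) + 1 - 2 * (T.irreg : ℚ)) / 8) := by
  classical
  subst hn
  have hA := T.key_bound' v
  have hB := (T.rev).key_bound' v
  rw [T.rev_irreg, T.rev_triangles v, T.rev_outDeg v] at hB
  have hsum := T.deg_add' v
  have habs : ((T.outDeg v : ℤ) - T.inDeg v).natAbs ≤ T.irreg :=
    Finset.le_sup (f := fun u => ((T.outDeg u : ℤ) - T.inDeg u).natAbs)
      (Finset.mem_univ v)
  set a := T.outDeg v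
  set b := T.inDeg v
  set i := T.irreg
  set t := (T.trianglesThrough v).card
  set n := Fintype.card V
  have hA' : (a : ℚ) * ((n : ℚ) - a - i) ≤ 2 * t := by exact_mod_cast hA
  have hB' : (b : ℚ) * ((n : ℚ) - b - i) ≤ 2 * t := by exact_mod_cast hB
  have hsum' : (a : ℚ) + b + 1 = n := by exact_mod_cast hsum
  have h3 : (a : ℤ) - b ≤ i ∧ (b : ℤ) - a ≤ i := by omega
  have h3' : (a : ℚ) - b ≤ i := by exact_mod_cast h3.1
  have h4' : (b : ℚ) - a ≤ i := by exact_mod_cast h3.2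
  have hq := Tournament.qalgebra (t : ℚ) a b n i hsum' hA' hB' h3' h4'
  constructor
  · intro h1
    have hi1 : (i : ℚ) = 1 := by rw [h1]; norm_num
    have := hq.1 hi1
    rw [ge_iff_le, div_le_iff₀ (by norm_num : (0:ℚ) < 8)]
    linarith
  · intro h1
    have hcase : i = 0 ∨ 2 ≤ i := by omega
    have hcase' : (i : ℚ) = 0 ∨ 2 ≤ (i : ℚ) := by
      rcases hcase with h | h
      · left; rw [h]; norm_num
      · right; exact_mod_cast h
    have := hq.2 hcase'
    rw [ge_iff_le, div_le_iff₀ (by norm_num : (0:ℚ) < 8)]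
    linarith
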